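/- Let $H$ be a Hilbert space, $f$ a bounded nonnegative multiplication-type self-adjoint operator, and $P = \Delta + V$ with $\Delta = \nabla^*\nabla$ and $V \geq 0$ a bounded multiplication operator commuting with $f$. Suppose the operator identity $f P + P f = 2\nabla^* f \nabla + M$ holds, where $M$ (multiplication by $(\Delta + 2V)f$) is a nonnegative operator. Then for all $u \in D(P)$: $\|f^{1/2}\nabla u\|^2 \leq \|Pu\|\,\|fu\|$. -/

import Mathlib

open ContinuousLinearMap

/-- Abstract form of the symmetrized weighted estimate: if
`f P + P f = 2 ∇* f ∇ + M` with `M ≥ 0`, then `‖f^{1/2} ∇u‖² ≤ ‖Pu‖ ‖fu‖`. -/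
theorem symmetrized_weighted_estimate {H K : Type*}
    [NormedAddCommGroup H] [InnerProductSpace ℂ H] [CompleteSpace H]
    [NormedAddCommGroup K] [InnerProductSpace ℂ K] [CompleteSpace K]
    (grad : H →L[ℂ] K) (fH V M P : H →L[ℂ] H) (fK fKsqrt : K →L[ℂ] K)
    (hfH : IsSelfAdjoint fH) (hfHpos : ∀ u : H, 0 ≤ (@inner ℂ H _ (fH u) u).re)
    (hV : IsSelfAdjoint V) (hVpos : ∀ u : H, 0 ≤ (@inner ℂ H _ (V u) u).re)
    (hVf : V ∘L fH = fH ∘L V)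
    (hMpos : ∀ u : H, 0 ≤ (@inner ℂ H _ (M u) u).re)
    (hP : P = (ContinuousLinearMap.adjoint grad) ∘L grad + V)
    (hsqrt : fKsqrt ∘L fKsqrt = fK) (hsqrtsa : IsSelfAdjoint fKsqrt)
    (hid : fH ∘L P + P ∘L fH
      = (2 : ℂ) • ((ContinuousLinearMap.adjoint grad) ∘L fK ∘L grad) + M) :
    ∀ u : H, ‖fKsqrt (grad u)‖ ^ 2 ≤ ‖P u‖ * ‖fH u‖ := by
  intro u
  have hfHsym := ContinuousLinearMap.isSelfAdjoint_iff_isSymmetric.mp hfH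
  have hsqsym := ContinuousLinearMap.isSelfAdjoint_iff_isSymmetric.mp hsqrtsa
  -- P is self-adjoint
  have hPsa : IsSelfAdjoint P := by
    rw [ContinuousLinearMap.isSelfAdjoint_iff', hP, map_add,
      ContinuousLinearMap.adjoint_comp, ContinuousLinearMap.adjoint_adjoint,
      ContinuousLinearMap.isSelfAdjoint_iff'.mp hV]
  have hPsym := ContinuousLinearMap.isSelfAdjoint_iff_isSymmetric.mp hPsa
  -- key inner product computation
  have key : (2 : ℝ) * (@inner ℂ H _ (P u) (fH u)).re
      = 2 * ‖fKsqrt (grad u)‖ ^ 2 + (@inner ℂ H _ (M u) u).re := by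
    have h1 : @inner ℂ H _ ((fH ∘L P + P ∘L fH) u) u
        = @inner ℂ H _ (((2 : ℂ) • ((ContinuousLinearMap.adjoint grad) ∘L fK ∘L grad) + M) u) u := by
      rw [hid]
    simp only [ContinuousLinearMap.add_apply, ContinuousLinearMap.comp_apply,
      ContinuousLinearMap.smul_apply, inner_add_left, inner_smul_left] at h1
    have h2 : @inner ℂ H _ (fH (P u)) u = @inner ℂ H _ (P u) (fH u) := hfHsym (P u) u
    have h3 : (@inner ℂ H _ (P (fH u)) u).re = (@inner ℂ H _ (P u) (fH u)).re := by
      have hp := hPsym (fH u) u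
      simp only [ContinuousLinearMap.coe_coe] at hp
      rw [hp,
        show (@inner ℂ H _ (fH u) (P u)) = (starRingEnd ℂ) (@inner ℂ H _ (P u) (fH u)) from
          (inner_conj_symm _ _).symm, Complex.conj_re]
    have h4 : @inner ℂ K _ (fK (grad u)) (grad u)
        = ((‖fKsqrt (grad u)‖ ^ 2 : ℝ) : ℂ) := by
      rw [← hsqrt]
      simp only [ContinuousLinearMap.comp_apply]
      have hs := hsqsym (fKsqrt (grad u)) (grad u)
      simp only [ContinuousLinearMap.coe_coe] at hs
      rw [hs, inner_self_eq_norm_sq_to_K]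
      norm_num [Complex.ofReal_pow]
    have h5 : @inner ℂ H _ ((ContinuousLinearMap.adjoint grad) (fK (grad u))) u
        = @inner ℂ K _ (fK (grad u)) (grad u) :=
      ContinuousLinearMap.adjoint_inner_left grad u (fK (grad u))
    rw [h2, h5, h4] at h1
    have h6 := congrArg Complex.re h1
    simp only [Complex.add_re, Complex.mul_re, map_ofNat, Complex.re_ofNat, Complex.im_ofNat,
      Complex.ofReal_re, Complex.ofReal_im, ← Complex.ofReal_pow] at h6
    rw [h3] at h6
    linarith [h6]
  have hM := hMpos u
  have hle : ‖fKsqrt (grad u)‖ ^ 2 ≤ (@inner ℂ H _ (P u) (fH u)).re := by linarith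
  calc ‖fKsqrt (grad u)‖ ^ 2 ≤ (@inner ℂ H _ (P u) (fH u)).re := hle
    _ ≤ ‖@inner ℂ H _ (P u) (fH u)‖ := by
        exact Complex.re_le_norm _
    _ ≤ ‖P u‖ * ‖fH u‖ := norm_inner_le_norm _ _
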